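/- arXiv:1910.00759 — 2 statements merged into one kernel-verified Lean document; each statement's English description precedes it below -/
import Mathlib

section
/- Assume the Schur complement S_h is invertible with continuous linear inverse S_h⁻¹ : V → V. Let H₁₁ := S_h⁻¹, H₁₂ := -S_h⁻¹ ∘ Y ∘ G⁻¹, H₂₁ := -G⁻¹ ∘ Z ∘ S_h⁻¹, H₂₂ := G⁻¹ + G⁻¹ ∘ Z ∘ S_h⁻¹ ∘ Y ∘ G⁻¹, and let M : EuclideanSpace ℝ (Fin 2) → EuclideanSpace ℝ (Fin 2) be the linear map with matrix entries ‖H₁₁‖, ‖H₁₂‖, ‖H₂₁‖, ‖H₂₂‖. Then for every (g₁, g₂) ∈ V × W, the unique solution (φ₁, φ₂) of T φ₁ + Y φ₂ = g₁, Z φ₁ + G φ₂ = g₂ satisfies √(‖φ₁‖² + ‖φ₂‖²) ≤ ‖M‖ · √(‖g₁‖² + ‖g₂‖²), where ‖M‖ is the operator norm of M with respect to the Euclidean norm on ℝ². -/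
lemma aux_mat (a b c d x y p q : ℝ) (_ha : 0 ≤ a) (_hb : 0 ≤ b) (_hc : 0 ≤ c) (_hd : 0 ≤ d)
    (_hx : 0 ≤ x) (_hy : 0 ≤ y) (hp : 0 ≤ p) (hq : 0 ≤ q)
    (h1 : p ≤ a*x + b*y) (h2 : q ≤ c*x + d*y) :
    Real.sqrt (p^2 + q^2) ≤
      ‖(Matrix.toEuclideanCLM (𝕜 := ℝ) (n := Fin 2) !![a, b; c, d] :
        EuclideanSpace ℝ (Fin 2) →L[ℝ] EuclideanSpace ℝ (Fin 2))‖ * Real.sqrt (x^2 + y^2) := by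
  set M := (Matrix.toEuclideanCLM (𝕜 := ℝ) (n := Fin 2) !![a, b; c, d] :
        EuclideanSpace ℝ (Fin 2) →L[ℝ] EuclideanSpace ℝ (Fin 2))
  set v : EuclideanSpace ℝ (Fin 2) := (WithLp.equiv 2 _).symm ![x, y]
  have key : M v = (WithLp.equiv 2 _).symm ![a*x + b*y, c*x + d*y] := by
    simp only [M, v, WithLp.equiv_symm_apply, Matrix.toEuclideanCLM_toLp]
    congr 1
    funext i
    fin_cases i <;>
      simp [Matrix.toLin'_apply, Matrix.mulVec, dotProduct, Fin.sum_univ_two]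
  calc Real.sqrt (p^2 + q^2) ≤ Real.sqrt ((a*x+b*y)^2 + (c*x+d*y)^2) :=
        Real.sqrt_le_sqrt (add_le_add (pow_le_pow_left₀ hp h1 2) (pow_le_pow_left₀ hq h2 2))
    _ = ‖M v‖ := by
        rw [key, EuclideanSpace.norm_eq]
        simp [Fin.sum_univ_two, sq_abs]
    _ ≤ ‖M‖ * ‖v‖ := M.le_opNorm v
    _ = ‖M‖ * Real.sqrt (x^2 + y^2) := by
        rw [EuclideanSpace.norm_eq]
        simp [v, Fin.sum_univ_two, sq_abs]

/-- Context: `V`, `W` real Hilbert spaces with the ℓ² product norm on `V × W`;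
`G` invertible with continuous linear inverse `Ginv`; `S_h := T - Y ∘ Ginv ∘ Z`
invertible with continuous linear inverse `Shinv`. With `H₁₁ := Shinv`,
`H₁₂ := -(Shinv∘Y∘Ginv)`, `H₂₁ := -(Ginv∘Z∘Shinv)`, `H₂₂ := Ginv + Ginv∘Z∘Shinv∘Y∘Ginv`,
and `M` the operator on `EuclideanSpace ℝ (Fin 2)` with matrix entries the norms of the
blocks, for every `(g₁, g₂)` the unique solution `(φ₁, φ₂)` of `T φ₁ + Y φ₂ = g₁`,
`Z φ₁ + G φ₂ = g₂` satisfies `√(‖φ₁‖² + ‖φ₂‖²) ≤ ‖M‖ · √(‖g₁‖² + ‖g₂‖²)`. -/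
theorem stmt_12
    {V W : Type*} [NormedAddCommGroup V] [InnerProductSpace ℝ V] [CompleteSpace V]
    [NormedAddCommGroup W] [InnerProductSpace ℝ W] [CompleteSpace W]
    (T : V →L[ℝ] V) (Y : W →L[ℝ] V) (Z : V →L[ℝ] W) (G : W →L[ℝ] W)
    (Ginv : W →L[ℝ] W)
    (hG1 : G.comp Ginv = ContinuousLinearMap.id ℝ W)
    (hG2 : Ginv.comp G = ContinuousLinearMap.id ℝ W)
    (Shinv : V →L[ℝ] V)
    (hSh1 : (T - Y.comp (Ginv.comp Z)).comp Shinv = ContinuousLinearMap.id ℝ V)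
    (hSh2 : Shinv.comp (T - Y.comp (Ginv.comp Z)) = ContinuousLinearMap.id ℝ V) :
    ∀ g₁ : V, ∀ g₂ : W,
      ∃ φ₁ : V, ∃ φ₂ : W,
        (T φ₁ + Y φ₂ = g₁ ∧ Z φ₁ + G φ₂ = g₂) ∧
        (∀ ψ₁ : V, ∀ ψ₂ : W, T ψ₁ + Y ψ₂ = g₁ → Z ψ₁ + G ψ₂ = g₂ →
          ψ₁ = φ₁ ∧ ψ₂ = φ₂) ∧
        Real.sqrt (‖φ₁‖ ^ 2 + ‖φ₂‖ ^ 2) ≤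
          ‖(Matrix.toEuclideanCLM (𝕜 := ℝ) (n := Fin 2)
              !![‖Shinv‖, ‖-(Shinv.comp (Y.comp Ginv))‖;
                 ‖-(Ginv.comp (Z.comp Shinv))‖,
                 ‖Ginv + Ginv.comp (Z.comp (Shinv.comp (Y.comp Ginv)))‖] :
            EuclideanSpace ℝ (Fin 2) →L[ℝ] EuclideanSpace ℝ (Fin 2))‖ *
            Real.sqrt (‖g₁‖ ^ 2 + ‖g₂‖ ^ 2) := by
  intro g₁ g₂
  have hG1' : ∀ w, G (Ginv w) = w := fun w => DFunLike.congr_fun hG1 w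
  have hG2' : ∀ w, Ginv (G w) = w := fun w => DFunLike.congr_fun hG2 w
  have hSh1' : ∀ v, T (Shinv v) - Y (Ginv (Z (Shinv v))) = v := fun v => by
    have := DFunLike.congr_fun hSh1 v
    simpa using this
  have hSh2' : ∀ v, Shinv (T v - Y (Ginv (Z v))) = v := fun v => by
    have := DFunLike.congr_fun hSh2 v
    simpa using this
  set φ₁ : V := Shinv (g₁ - Y (Ginv g₂)) with hφ₁
  set φ₂ : W := Ginv (g₂ - Z φ₁) with hφ₂
  have eq2 : Z φ₁ + G φ₂ = g₂ := by
    rw [hφ₂, map_sub, map_sub, hG1' g₂, hG1' (Z φ₁)]; abel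
  have eq1 : T φ₁ + Y φ₂ = g₁ := by
    have h : T φ₁ - Y (Ginv (Z φ₁)) = g₁ - Y (Ginv g₂) := hSh1' (g₁ - Y (Ginv g₂))
    rw [hφ₂, map_sub, map_sub]
    calc T φ₁ + (Y (Ginv g₂) - Y (Ginv (Z φ₁)))
        = (T φ₁ - Y (Ginv (Z φ₁))) + Y (Ginv g₂) := by abel
      _ = (g₁ - Y (Ginv g₂)) + Y (Ginv g₂) := by rw [h]
      _ = g₁ := by abel
  refine ⟨φ₁, φ₂, ⟨eq1, eq2⟩, ?_, ?_⟩
  · intro ψ₁ ψ₂ h1 h2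
    have hψ₂ : ψ₂ = Ginv (g₂ - Z ψ₁) := by
      have := congrArg Ginv h2
      rw [map_add, hG2' ψ₂] at this
      rw [map_sub, ← this]; abel
    have hψ₁ : ψ₁ = φ₁ := by
      rw [hψ₂] at h1
      have : T ψ₁ - Y (Ginv (Z ψ₁)) = g₁ - Y (Ginv g₂) := by
        rw [map_sub, map_sub] at h1
        rw [eq_sub_iff_add_eq, ← h1]
        abel
      have := congrArg Shinv this
      rwa [hSh2' ψ₁, ← hφ₁] at this
    exact ⟨hψ₁, by rw [hψ₂, hψ₁, ← hφ₂]⟩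
  · -- norm bound
    have b1 : ‖φ₁‖ ≤ ‖Shinv‖ * ‖g₁‖ + ‖-(Shinv.comp (Y.comp Ginv))‖ * ‖g₂‖ := by
      have : φ₁ = Shinv g₁ - (Shinv.comp (Y.comp Ginv)) g₂ := by
        rw [hφ₁, map_sub]; rfl
      rw [this]
      refine (norm_sub_le _ _).trans (add_le_add (Shinv.le_opNorm g₁) ?_)
      rw [norm_neg]
      exact (Shinv.comp (Y.comp Ginv)).le_opNorm g₂
    have b2 : ‖φ₂‖ ≤ ‖-(Ginv.comp (Z.comp Shinv))‖ * ‖g₁‖ +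
        ‖Ginv + Ginv.comp (Z.comp (Shinv.comp (Y.comp Ginv)))‖ * ‖g₂‖ := by
      have : φ₂ = -((Ginv.comp (Z.comp Shinv)) g₁) +
          (Ginv + Ginv.comp (Z.comp (Shinv.comp (Y.comp Ginv)))) g₂ := by
        rw [hφ₂, hφ₁]
        simp only [ContinuousLinearMap.comp_apply, ContinuousLinearMap.add_apply, map_sub]
        abel
      rw [this]
      refine (norm_add_le _ _).trans (add_le_add ?_ ?_)
      · have := (-(Ginv.comp (Z.comp Shinv))).le_opNorm g₁
        simpa using this
      · exact (Ginv + Ginv.comp (Z.comp (Shinv.comp (Y.comp Ginv)))).le_opNorm g₂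
    exact aux_mat _ _ _ _ _ _ _ _ (norm_nonneg _) (norm_nonneg _) (norm_nonneg _)
      (norm_nonneg _) (norm_nonneg _) (norm_nonneg _) (norm_nonneg _) (norm_nonneg _) b1 b2
end

section
/- Assume ‖L⁻¹(F(û))‖ ≤ β; assume that for every v ∈ X with ‖v‖ ≤ 2β the operator norm of L⁻¹ ∘ (F'(û) - F'(û + v)) : X → X is at most ω‖v‖; and assume βω < 1/2. Then, setting ρ := (1 - √(1 - 2βω))/ω, there exists u ∈ X with ‖u - û‖ ≤ ρ and F(u) = 0; moreover, u is the unique zero of F in the closed ball {x ∈ X : ‖x - û‖ ≤ 2β}. -/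
open Set in
set_option maxHeartbeats 1000000 in
/-- Context: `X`, `Y` real Banach spaces; `β ≥ 0`, `ω > 0`; `F : X → Y` Fréchet
differentiable at every point of the closed ball of radius `2β` around `uh`, with
derivative `F' x`; `L := F' uh` invertible with continuous linear inverse `Linv`.
Statement: if `‖Linv (F uh)‖ ≤ β`, if `‖Linv ∘ (F' uh - F' (uh + v))‖ ≤ ω ‖v‖` for all
`‖v‖ ≤ 2β`, and if `β ω < 1/2`, then with `ρ := (1 - √(1 - 2βω))/ω` there exists
`u` with `‖u - uh‖ ≤ ρ` and `F u = 0`, which is the unique zero of `F` in the closed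
ball `{x : ‖x - uh‖ ≤ 2β}`. -/
theorem stmt_13
    {X Y : Type*} [NormedAddCommGroup X] [NormedSpace ℝ X] [CompleteSpace X]
    [NormedAddCommGroup Y] [NormedSpace ℝ Y] [CompleteSpace Y]
    (β ω : ℝ) (hβ : 0 ≤ β) (hω : 0 < ω)
    (uh : X) (F : X → Y) (F' : X → X →L[ℝ] Y)
    (hdiff : ∀ x : X, ‖x - uh‖ ≤ 2 * β → HasFDerivAt F (F' x) x)
    (Linv : Y →L[ℝ] X)
    (hL1 : (F' uh).comp Linv = ContinuousLinearMap.id ℝ Y)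
    (hL2 : Linv.comp (F' uh) = ContinuousLinearMap.id ℝ X)
    (hβbound : ‖Linv (F uh)‖ ≤ β)
    (hωbound : ∀ v : X, ‖v‖ ≤ 2 * β →
      ‖Linv.comp (F' uh - F' (uh + v))‖ ≤ ω * ‖v‖)
    (hβω : β * ω < 1 / 2) :
    ∃ u : X, ‖u - uh‖ ≤ (1 - Real.sqrt (1 - 2 * β * ω)) / ω ∧ F u = 0 ∧
      ∀ x : X, ‖x - uh‖ ≤ 2 * β → F x = 0 → x = u := by
  set s := Real.sqrt (1 - 2 * β * ω) with hs_def
  have h2βω : 0 < 1 - 2 * β * ω := by nlinarith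
  have hs_pos : 0 < s := Real.sqrt_pos.2 h2βω
  have hs_sq : s ^ 2 = 1 - 2 * β * ω := Real.sq_sqrt h2βω.le
  have hs_le1 : s ≤ 1 := by
    calc s ≤ Real.sqrt 1 := Real.sqrt_le_sqrt (by nlinarith)
      _ = 1 := Real.sqrt_one
  set ρ := (1 - s) / ω with hρ_def
  have hρ_nonneg : 0 ≤ ρ := div_nonneg (by linarith) hω.le
  have hωρ : ω * ρ = 1 - s := by rw [hρ_def]; field_simp [hω.ne']
  have hρ_le : ρ ≤ 2 * β := by
    rw [div_le_iff₀ hω]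
    nlinarith
  -- the simplified Newton map
  set T : X → X := fun x => x - Linv (F x) with hT_def
  set T' : X → X →L[ℝ] X := fun x =>
    ContinuousLinearMap.id ℝ X - Linv.comp (F' x) with hT'_def
  have hTdiff : ∀ x : X, ‖x - uh‖ ≤ 2 * β → HasFDerivAt T (T' x) x := by
    intro x hx
    exact (hasFDerivAt_id x).sub (Linv.hasFDerivAt.comp x (hdiff x hx))
  have hT'norm : ∀ x : X, ‖x - uh‖ ≤ 2 * β → ‖T' x‖ ≤ ω * ‖x - uh‖ := by
    intro x hx
    have hxx : uh + (x - uh) = x := by abel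
    have : T' x = Linv.comp (F' uh - F' (uh + (x - uh))) := by
      rw [hxx]
      simp only [hT'_def]
      rw [ContinuousLinearMap.comp_sub, hL2]
    rw [this]
    exact hωbound (x - uh) hx
  have hfix : ∀ x : X, T x = x ↔ F x = 0 := by
    intro x
    constructor
    · intro h
      have h0 : Linv (F x) = 0 := by
        have h' : x - Linv (F x) = x := h
        exact sub_eq_self.mp h'
      have := congrArg (fun z => (F' uh) z) h0
      simp only [map_zero] at this
      have h1 : (F' uh) (Linv (F x)) = F x := by
        have := congrFun (congrArg DFunLike.coe hL1) (F x)
        simpa using this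
      rw [h1] at this
      exact this
    · intro h
      simp [hT_def, h]
  -- the quadratic estimate on the closed ball of radius 2β
  have hquad : ∀ v : X, ‖v‖ ≤ 2 * β →
      ‖T (uh + v) - T uh‖ ≤ ω / 2 * ‖v‖ ^ 2 := by
    intro v hv
    set g : ℝ → X := fun t => T (uh + t • v) - T uh with hg_def
    set g' : ℝ → X := fun t => (T' (uh + t • v)) v with hg'_def
    set B : ℝ → ℝ := fun t => ω / 2 * t ^ 2 * ‖v‖ ^ 2 with hB_def
    set B' : ℝ → ℝ := fun t => ω * t * ‖v‖ ^ 2 with hB'_def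
    have hmem : ∀ t ∈ Icc (0 : ℝ) 1, ‖(uh + t • v) - uh‖ ≤ 2 * β := by
      intro t ht
      have : ‖(uh + t • v) - uh‖ = |t| * ‖v‖ := by
        simp [norm_smul]
      rw [this, abs_of_nonneg ht.1]
      calc t * ‖v‖ ≤ 1 * ‖v‖ := by
            apply mul_le_mul_of_nonneg_right ht.2 (norm_nonneg v)
        _ ≤ 2 * β := by rw [one_mul]; exact hv
    have hgderiv : ∀ t ∈ Icc (0 : ℝ) 1, HasDerivAt g (g' t) t := by
      intro t ht
      have hline : HasDerivAt (fun t : ℝ => uh + t • v) v t := by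
        simpa using ((hasDerivAt_id t).smul_const v).const_add uh
      exact ((hTdiff _ (hmem t ht)).comp_hasDerivAt t hline).sub_const (T uh)
    have hgcont : ContinuousOn g (Icc 0 1) := fun t ht =>
      (hgderiv t ht).continuousAt.continuousWithinAt
    have hBderiv : ∀ t : ℝ, HasDerivAt B (B' t) t := by
      intro t
      have : HasDerivAt (fun t : ℝ => ω / 2 * t ^ 2 * ‖v‖ ^ 2)
          (ω / 2 * (2 * t) * ‖v‖ ^ 2) t := by
        exact (((hasDerivAt_pow 2 t).const_mul (ω / 2)).mul_const (‖v‖ ^ 2)).congr_deriv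
          (by ring)
      simpa [hB_def, hB'_def] using this.congr_deriv (by ring)
    have hbound : ∀ t ∈ Ico (0 : ℝ) 1, ‖g' t‖ ≤ B' t := by
      intro t ht
      have ht' : t ∈ Icc (0 : ℝ) 1 := ⟨ht.1, ht.2.le⟩
      calc ‖g' t‖ ≤ ‖T' (uh + t • v)‖ * ‖v‖ := (T' (uh + t • v)).le_opNorm v
        _ ≤ (ω * ‖(uh + t • v) - uh‖) * ‖v‖ :=
            mul_le_mul_of_nonneg_right (hT'norm _ (hmem t ht')) (norm_nonneg v)
        _ = ω * (|t| * ‖v‖) * ‖v‖ := by rw [show (uh + t • v) - uh = t • v by abel, norm_smul]; rfl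
        _ = ω * t * ‖v‖ ^ 2 := by rw [abs_of_nonneg ht.1]; ring
    have := image_norm_le_of_norm_deriv_right_le_deriv_boundary hgcont
      (fun t ht => (hgderiv t ⟨ht.1, ht.2.le⟩).hasDerivWithinAt)
      (by simp [hg_def, hB_def]) hBderiv hbound (right_mem_Icc.2 zero_le_one)
    simpa [hg_def, hB_def] using this
  -- T maps the closed ball of radius ρ into itself
  set S : Set X := Metric.closedBall uh ρ with hS_def
  have hball2β : ∀ x ∈ S, ‖x - uh‖ ≤ 2 * β := by
    intro x hx
    have : ‖x - uh‖ ≤ ρ := by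
      rw [← dist_eq_norm]; exact hx
    linarith
  have hmaps : MapsTo T S S := by
    intro x hx
    have hx' : ‖x - uh‖ ≤ ρ := by rw [← dist_eq_norm]; exact hx
    have h1 : ‖T x - T uh‖ ≤ ω / 2 * ‖x - uh‖ ^ 2 := by
      have := hquad (x - uh) (hball2β x hx)
      simpa using this
    have h2 : ‖T uh - uh‖ ≤ β := by
      simpa [hT_def] using hβbound
    have h3 : ω / 2 * ‖x - uh‖ ^ 2 ≤ ω / 2 * ρ ^ 2 := by
      apply mul_le_mul_of_nonneg_left _ (by linarith)
      exact pow_le_pow_left₀ (norm_nonneg _) hx' 2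
    have hquadρ : ω / 2 * ρ ^ 2 + β = ρ := by
      have : ω * ρ = 1 - s := hωρ
      have hρω : ρ = (1 - s) / ω := hρ_def
      field_simp [hρω]
      nlinarith [hs_sq]
    have : ‖T x - uh‖ ≤ ρ := by
      calc ‖T x - uh‖ = ‖(T x - T uh) + (T uh - uh)‖ := by rw [sub_add_sub_cancel]
        _ ≤ ‖T x - T uh‖ + ‖T uh - uh‖ := norm_add_le _ _
        _ ≤ ω / 2 * ρ ^ 2 + β := by linarith
        _ = ρ := hquadρ
    show T x ∈ Metric.closedBall uh ρ
    rw [Metric.mem_closedBall, dist_eq_norm]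
    exact this
  -- T is Lipschitz on S with constant κ = 1 - s < 1
  have hκnn : (0 : ℝ) ≤ 1 - s := by linarith
  set κ : NNReal := ⟨1 - s, hκnn⟩ with hκ_def
  have hκ1 : (κ : ℝ) < 1 := by
    show (1 : ℝ) - s < 1
    linarith
  have hSconv : Convex ℝ S := convex_closedBall uh ρ
  have hlip : LipschitzOnWith κ T S := by
    apply LipschitzOnWith.of_dist_le_mul
    intro x hx y hy
    rw [dist_eq_norm, dist_eq_norm]
    have := hSconv.norm_image_sub_le_of_norm_hasFDerivWithin_le
      (f := T) (f' := T')
      (fun z hz => (hTdiff z (hball2β z hz)).hasFDerivWithinAt)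
      (C := (κ : ℝ)) ?_ hy hx
    · exact this
    · intro z hz
      have hz' : ‖z - uh‖ ≤ ρ := by rw [← dist_eq_norm]; exact hz
      calc ‖T' z‖ ≤ ω * ‖z - uh‖ := hT'norm z (hball2β z hz)
        _ ≤ ω * ρ := mul_le_mul_of_nonneg_left hz' hω.le
        _ = (κ : ℝ) := hωρ
  have hcontr : ContractingWith κ (hmaps.restrict T S S) :=
    ⟨hκ1, hlip.mapsToRestrict hmaps⟩
  have hScomplete : IsComplete S := Metric.isClosed_closedBall.isComplete
  have huhS : uh ∈ S := by
    simp [hS_def, Metric.mem_closedBall, hρ_nonneg]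
  obtain ⟨u, huS, hufix, -, -⟩ :=
    hcontr.exists_fixedPoint' hScomplete hmaps huhS (edist_ne_top _ _)
  have hu2β : ‖u - uh‖ ≤ 2 * β := hball2β u huS
  have hFu : F u = 0 := (hfix u).mp hufix
  refine ⟨u, ?_, hFu, ?_⟩
  · rw [← dist_eq_norm]; exact huS
  · intro x hx hFx
    have hTx : T x = x := (hfix x).mpr hFx
    have hTu : T u = u := hufix
    have hconv2 : Convex ℝ (Metric.closedBall uh (2 * β)) := convex_closedBall uh (2 * β)
    have hbound2 : ∀ z ∈ Metric.closedBall uh (2 * β), ‖T' z‖ ≤ ω * (2 * β) := by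
      intro z hz
      have hz' : ‖z - uh‖ ≤ 2 * β := by rw [← dist_eq_norm]; exact hz
      calc ‖T' z‖ ≤ ω * ‖z - uh‖ := hT'norm z hz'
        _ ≤ ω * (2 * β) := mul_le_mul_of_nonneg_left hz' hω.le
    have hxmem : x ∈ Metric.closedBall uh (2 * β) := by
      rw [Metric.mem_closedBall, dist_eq_norm]; exact hx
    have humem : u ∈ Metric.closedBall uh (2 * β) := by
      rw [Metric.mem_closedBall, dist_eq_norm]; exact hu2β
    have := hconv2.norm_image_sub_le_of_norm_hasFDerivWithin_le
      (f := T) (f' := T')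
      (fun z hz => (hTdiff z (by rw [← dist_eq_norm]; exact hz)).hasFDerivWithinAt)
      hbound2 humem hxmem
    rw [hTx, hTu] at this
    have hxu : ‖x - u‖ ≤ ω * (2 * β) * ‖x - u‖ := this
    have : ‖x - u‖ = 0 := by nlinarith [norm_nonneg (x - u)]
    have := norm_eq_zero.mp this
    exact sub_eq_zero.mp this
end
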